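/- Let n ≥ 1 and let p_1,…,p_n, q_1,…,q_n, r_1,…,r_n be natural numbers with r_i ≥ 1 for all i. Then the group G_E(p,q,r) is isomorphic to the infinite cyclic group ℤ if and only if exactly one of the two sums p_1 + ⋯ + p_n and q_1 + ⋯ + q_n equals 0. -/

import Mathlib

/-- The relators of the echinus group `G_E(p,q,r) = ⟨b_1,…,b_n, t | b_j^{2^{r_j}} = 1
(1 ≤ j ≤ n), b_i^{2^{p_i}} = b_{i+1}^{2^{q_i}} (1 ≤ i ≤ n−1),
t⁻¹ b_n^{2^{p_n}} t = b_1^{2^{q_n}}⟩`, where `some i` is `b_{i+1}` and `none` is `t`. -/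
def echinusRels (n : ℕ) (hn : 0 < n) (p q r : Fin n → ℕ) :
    Set (FreeGroup (Option (Fin n))) :=
  {x | ∃ j : Fin n, x = FreeGroup.of (some j) ^ 2 ^ r j} ∪
  {x | ∃ i j : Fin n, (i : ℕ) + 1 = (j : ℕ) ∧
      x = FreeGroup.of (some i) ^ 2 ^ p i * (FreeGroup.of (some j) ^ 2 ^ q i)⁻¹} ∪
  {(FreeGroup.of none)⁻¹ *
      FreeGroup.of (some ⟨n - 1, Nat.sub_lt hn Nat.one_pos⟩) ^
        2 ^ p ⟨n - 1, Nat.sub_lt hn Nat.one_pos⟩ *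
      FreeGroup.of none *
      (FreeGroup.of (some ⟨0, hn⟩) ^ 2 ^ q ⟨n - 1, Nat.sub_lt hn Nat.one_pos⟩)⁻¹}

namespace Stmt10Aux

open Multiplicative

/-- cyclic reduction of a natural number into `Fin n` -/
def ixx {n : ℕ} (hn : 0 < n) (m : ℕ) : Fin n := ⟨m % n, Nat.mod_lt m hn⟩

/-- cyclic successor on `Fin n` -/
def sc {n : ℕ} (hn : 0 < n) (i : Fin n) : Fin n :=
  if h : (i : ℕ) + 1 < n then ⟨(i : ℕ) + 1, h⟩ else ⟨0, hn⟩

lemma ixx_coe {n : ℕ} (hn : 0 < n) (i : Fin n) : ixx hn (i : ℕ) = i :=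
  Fin.ext (Nat.mod_eq_of_lt i.2)

lemma ixx_add_n {n : ℕ} (hn : 0 < n) (m : ℕ) : ixx hn (m + n) = ixx hn m :=
  Fin.ext (Nat.add_mod_right m n)

lemma sc_ixx {n : ℕ} (hn : 0 < n) (m : ℕ) : sc hn (ixx hn m) = ixx hn (m + 1) := by
  have hlt : m % n < n := Nat.mod_lt m hn
  have h1n : (m + 1) % n = if m % n + 1 = n then 0 else m % n + 1 := by
    rcases eq_or_lt_of_le (Nat.succ_le_of_lt hn) with h1 | h1
    · have hn1 : n = 1 := h1.symm
      subst hn1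
      simp [Nat.mod_one]
    · have hstep : (m + 1) % n = (m % n + 1) % n := by
        conv_lhs => rw [Nat.add_mod, Nat.mod_eq_of_lt h1]
      rw [hstep]
      split_ifs with h
      · rw [h, Nat.mod_self]
      · exact Nat.mod_eq_of_lt (by omega)
  apply Fin.ext
  show (sc hn (ixx hn m) : ℕ) = (m + 1) % n
  unfold sc ixx
  split_ifs with h
  · simp only [h1n]
    rw [if_neg (by simpa using Nat.ne_of_lt h)]
  · simp only [h1n]
    simp only [not_lt] at h
    rw [if_pos (by simpa using le_antisymm hlt (by simpa using h))]

lemma conj_torsion {G : Type*} [Group G] (t b : G) (P R : ℕ) (hP : 1 ≤ P) (hR : 1 ≤ R)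
    (hrel : b = t * b ^ 2 ^ P * t⁻¹) (htor : b ^ 2 ^ R = 1) : b = 1 := by
  have key : ∀ m : ℕ, b = t ^ m * b ^ 2 ^ (m * P) * (t ^ m)⁻¹ := by
    intro m
    induction m with
    | zero => simp
    | succ m ih =>
      calc b = t * b ^ 2 ^ P * t⁻¹ := hrel
        _ = t * (t ^ m * b ^ 2 ^ (m * P) * (t ^ m)⁻¹) ^ 2 ^ P * t⁻¹ := by rw [← ih]
        _ = t * (t ^ m * (b ^ 2 ^ (m * P)) ^ 2 ^ P * (t ^ m)⁻¹) * t⁻¹ := by rw [conj_pow]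
        _ = t ^ (m + 1) * b ^ 2 ^ ((m + 1) * P) * (t ^ (m + 1))⁻¹ := by
            rw [← pow_mul, ← pow_add]
            have : m * P + P = (m + 1) * P := by ring
            rw [this]
            group
  have h2 : b ^ 2 ^ (R * P) = 1 := by
    have : 2 ^ (R * P) = 2 ^ R * 2 ^ (R * P - R) := by
      rw [← pow_add]
      congr 1
      have : R ≤ R * P := Nat.le_mul_of_pos_right R hP
      omega
    rw [this, pow_mul, htor, one_pow]
  calc b = t ^ R * b ^ 2 ^ (R * P) * (t ^ R)⁻¹ := key R
    _ = 1 := by rw [h2]; group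

section Rels

variable {n : ℕ} (hn : 0 < n) (p q r : Fin n → ℕ)

lemma mem_tor (j : Fin n) :
    FreeGroup.of (some j) ^ 2 ^ r j ∈ echinusRels n hn p q r :=
  Or.inl (Or.inl ⟨j, rfl⟩)

lemma mem_mid {i j : Fin n} (h : (i : ℕ) + 1 = (j : ℕ)) :
    FreeGroup.of (some i) ^ 2 ^ p i * (FreeGroup.of (some j) ^ 2 ^ q i)⁻¹ ∈
      echinusRels n hn p q r :=
  Or.inl (Or.inr ⟨i, j, h, rfl⟩)

lemma mem_t :
    (FreeGroup.of none)⁻¹ *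
      FreeGroup.of (some ⟨n - 1, Nat.sub_lt hn Nat.one_pos⟩) ^
        2 ^ p ⟨n - 1, Nat.sub_lt hn Nat.one_pos⟩ *
      FreeGroup.of (none : Option (Fin n)) *
      (FreeGroup.of (some ⟨0, hn⟩) ^ 2 ^ q ⟨n - 1, Nat.sub_lt hn Nat.one_pos⟩)⁻¹ ∈
      echinusRels n hn p q r :=
  Or.inr rfl

lemma rel_of_mem {x : FreeGroup (Option (Fin n))} (hx : x ∈ echinusRels n hn p q r) :
    PresentedGroup.mk (echinusRels n hn p q r) x = 1 :=
  (QuotientGroup.eq_one_iff x).mpr (Subgroup.subset_normalClosure hx)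

lemma rel_tor (j : Fin n) :
    (PresentedGroup.of (rels := echinusRels n hn p q r) (some j)) ^ 2 ^ r j = 1 := by
  have := rel_of_mem hn p q r (mem_tor hn p q r j)
  rwa [map_pow] at this

lemma rel_mid {i j : Fin n} (h : (i : ℕ) + 1 = (j : ℕ)) :
    (PresentedGroup.of (rels := echinusRels n hn p q r) (some i)) ^ 2 ^ p i =
      (PresentedGroup.of (rels := echinusRels n hn p q r) (some j)) ^ 2 ^ q i := by
  have := rel_of_mem hn p q r (mem_mid hn p q r h)
  rw [map_mul, map_inv, map_pow, map_pow] at this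
  exact mul_inv_eq_one.mp this

lemma rel_t :
    (PresentedGroup.of (rels := echinusRels n hn p q r) none)⁻¹ *
      (PresentedGroup.of (rels := echinusRels n hn p q r)
          (some ⟨n - 1, Nat.sub_lt hn Nat.one_pos⟩)) ^
        2 ^ p ⟨n - 1, Nat.sub_lt hn Nat.one_pos⟩ *
      PresentedGroup.of (rels := echinusRels n hn p q r) none =
      (PresentedGroup.of (rels := echinusRels n hn p q r) (some ⟨0, hn⟩)) ^
        2 ^ q ⟨n - 1, Nat.sub_lt hn Nat.one_pos⟩ := by
  have := rel_of_mem hn p q r (mem_t hn p q r)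
  rw [map_mul, map_mul, map_mul, map_inv, map_inv, map_pow, map_pow] at this
  exact mul_inv_eq_one.mp this

end Rels


section AllB

variable {n : ℕ} (hn : 0 < n) (p q r : Fin n → ℕ)

local notation "OF" => PresentedGroup.of (rels := echinusRels n hn p q r)

/-- If all the `q i` vanish but `∑ p ≠ 0`, every generator `b j` is trivial. -/
lemma allB_of_q (hq0 : ∀ i, q i = 0) (hps : ∑ i, p i ≠ 0) (hr : ∀ i, 1 ≤ r i) :
    ∀ j : Fin n, (PresentedGroup.of (rels := echinusRels n hn p q r) (some j)) = 1 := by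
  have step : ∀ m : ℕ, m < n →
      OF (some (ixx hn m)) = OF (some (ixx hn 0)) ^ 2 ^ (∑ i ∈ Finset.range m, p (ixx hn i)) := by
    intro m
    induction m with
    | zero => intro _; simp
    | succ m ih =>
      intro hm
      have hmn : m < n := by omega
      have hrel := rel_mid hn p q r (i := ixx hn m) (j := ixx hn (m+1)) ?side
      · have hq : q (ixx hn m) = 0 := hq0 _
        rw [hq, pow_zero, pow_one] at hrel
        rw [← hrel, ih hmn, ← pow_mul, ← pow_add, Finset.sum_range_succ]
      · show m % n + 1 = (m + 1) % n
        rw [Nat.mod_eq_of_lt hmn, Nat.mod_eq_of_lt hm]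
  have hlast : (⟨n - 1, Nat.sub_lt hn Nat.one_pos⟩ : Fin n) = ixx hn (n - 1) :=
    (ixx_coe hn _).symm
  have hzero : (⟨0, hn⟩ : Fin n) = ixx hn 0 := (ixx_coe hn _).symm
  have hsum : (∑ i ∈ Finset.range (n-1), p (ixx hn i)) + p (ixx hn (n-1)) = ∑ i, p i := by
    rw [← Finset.sum_range_succ]
    have h1 : n - 1 + 1 = n := by omega
    rw [h1, ← Fin.sum_univ_eq_sum_range (fun i => p (ixx hn i)) n]
    exact Finset.sum_congr rfl fun j _ => by rw [ixx_coe]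
  have ht := rel_t hn p q r
  rw [hq0 _, pow_zero, pow_one, hlast, hzero,
      step (n-1) (by omega), ← pow_mul, ← pow_add, hsum] at ht
  have hkey : OF (some (ixx hn 0)) =
      (OF none)⁻¹ * OF (some (ixx hn 0)) ^ 2 ^ (∑ i, p i) * ((OF none)⁻¹)⁻¹ := by
    rw [inv_inv]; exact ht.symm
  have hB0 : OF (some (ixx hn 0)) = 1 :=
    conj_torsion (OF none)⁻¹ _ (∑ i, p i) (r (ixx hn 0)) (Nat.one_le_iff_ne_zero.mpr hps)
      (hr _) hkey (rel_tor hn p q r _)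
  intro j
  have hj : j = ixx hn (j : ℕ) := (ixx_coe hn j).symm
  rw [hj, step (j : ℕ) j.2, hB0, one_pow]

/-- If all the `p i` vanish but `∑ q ≠ 0`, every generator `b j` is trivial. -/
lemma allB_of_p (hp0 : ∀ i, p i = 0) (hqs : ∑ i, q i ≠ 0) (hr : ∀ i, 1 ≤ r i) :
    ∀ j : Fin n, (PresentedGroup.of (rels := echinusRels n hn p q r) (some j)) = 1 := by
  have step : ∀ d : ℕ, d < n →
      OF (some (ixx hn (n - 1 - d))) =
        OF (some (ixx hn (n - 1))) ^ 2 ^ (∑ i ∈ Finset.range d, q (ixx hn (n - 2 - i))) := by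
    intro d
    induction d with
    | zero => intro _; simp
    | succ d ih =>
      intro hd
      have hdn : d < n := by omega
      have hrel := rel_mid hn p q r (i := ixx hn (n - 2 - d)) (j := ixx hn (n - 1 - d)) ?side
      · have hp : p (ixx hn (n - 2 - d)) = 0 := hp0 _
        rw [hp, pow_zero, pow_one] at hrel
        have hidx : n - 1 - (d + 1) = n - 2 - d := by omega
        rw [hidx, hrel, ih hdn, ← pow_mul, ← pow_add, Finset.sum_range_succ]
      · show (n - 2 - d) % n + 1 = (n - 1 - d) % n
        rw [Nat.mod_eq_of_lt (by omega), Nat.mod_eq_of_lt (by omega)]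
        omega
  have hlast : (⟨n - 1, Nat.sub_lt hn Nat.one_pos⟩ : Fin n) = ixx hn (n - 1) :=
    (ixx_coe hn _).symm
  have hzero : (⟨0, hn⟩ : Fin n) = ixx hn 0 := (ixx_coe hn _).symm
  have hsum : (∑ i ∈ Finset.range (n-1), q (ixx hn (n - 2 - i))) + q (ixx hn (n-1)) =
      ∑ i, q i := by
    have hrefl : (∑ i ∈ Finset.range (n-1), q (ixx hn (n - 2 - i))) =
        ∑ i ∈ Finset.range (n-1), q (ixx hn i) := by
      rw [← Finset.sum_range_reflect (fun i => q (ixx hn i)) (n-1)]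
      refine Finset.sum_congr rfl fun j hj => ?_
      have hj' := Finset.mem_range.mp hj
      have h2 : n - 2 - j = n - 1 - 1 - j := by omega
      rw [h2]
    rw [hrefl, ← Finset.sum_range_succ]
    have h1 : n - 1 + 1 = n := by omega
    rw [h1, ← Fin.sum_univ_eq_sum_range (fun i => q (ixx hn i)) n]
    exact Finset.sum_congr rfl fun j _ => by rw [ixx_coe]
  have ht := rel_t hn p q r
  rw [hp0 _, pow_zero, pow_one, hlast, hzero] at ht
  have h0 : ixx hn 0 = ixx hn (n - 1 - (n-1)) := by congr 1; omega
  rw [h0, step (n-1) (by omega), ← pow_mul, ← pow_add, hsum] at ht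
  have hkey : OF (some (ixx hn (n-1))) =
      OF none * OF (some (ixx hn (n-1))) ^ 2 ^ (∑ i, q i) * (OF none)⁻¹ := by
    rw [← ht]; group
  have hB1 : OF (some (ixx hn (n-1))) = 1 :=
    conj_torsion (OF none) _ (∑ i, q i) (r (ixx hn (n-1))) (Nat.one_le_iff_ne_zero.mpr hqs)
      (hr _) hkey (rel_tor hn p q r _)
  intro j
  have hj : j = ixx hn (n - 1 - (n - 1 - (j : ℕ))) := by
    rw [show n - 1 - (n - 1 - (j : ℕ)) = (j : ℕ) by have := j.2; omega, ixx_coe]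
  rw [hj, step (n - 1 - (j:ℕ)) (by omega), hB1, one_pow]

end AllB

section Comb

variable {n : ℕ}

/-- scanning left from `a` towards `b`, find a "safe component" `(e₂, e₁]`. -/
lemma walk (hn : 0 < n) (p q : Fin n → ℕ) (b : ℕ) (hb : q (ixx hn b) ≠ 0) :
    ∀ a : ℕ, b < a → p (ixx hn a) ≠ 0 →
    ∃ e₁ e₂ : ℕ, b ≤ e₂ ∧ e₂ < e₁ ∧ e₁ ≤ a ∧ p (ixx hn e₁) ≠ 0 ∧ q (ixx hn e₂) ≠ 0 ∧
      ∀ m, e₂ < m → m < e₁ → p (ixx hn m) = 0 ∧ q (ixx hn m) = 0 := by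
  intro a
  induction a using Nat.strong_induction_on with
  | _ a IH =>
    intro hba hpa
    classical
    by_cases hex : ∃ m, b < m ∧ m < a ∧ ¬(p (ixx hn m) = 0 ∧ q (ixx hn m) = 0)
    · set Pr : ℕ → Prop := fun m => b < m ∧ m < a ∧ ¬(p (ixx hn m) = 0 ∧ q (ixx hn m) = 0)
        with hPr
      obtain ⟨m₀, hm₀⟩ := hex
      have hP : Pr (Nat.findGreatest Pr a) :=
        Nat.findGreatest_spec (le_of_lt hm₀.2.1) hm₀
      set g := Nat.findGreatest Pr a with hg
      have hgmax : ∀ m, g < m → m < a → p (ixx hn m) = 0 ∧ q (ixx hn m) = 0 := by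
        intro m h1 h2
        by_contra hcon
        exact Nat.findGreatest_is_greatest h1 (le_of_lt h2) ⟨lt_trans hP.1 h1, h2, hcon⟩
      by_cases hQ : q (ixx hn g) = 0
      · have hpg : p (ixx hn g) ≠ 0 := fun hp => hP.2.2 ⟨hp, hQ⟩
        obtain ⟨e₁, e₂, h1, h2, h3, h4, h5, h6⟩ := IH g hP.2.1 hP.1 hpg
        exact ⟨e₁, e₂, h1, h2, le_trans h3 (le_of_lt hP.2.1), h4, h5, h6⟩
      · exact ⟨a, g, le_of_lt hP.1, hP.2.1, le_refl a, hpa, hQ, hgmax⟩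
    · push_neg at hex
      exact ⟨a, b, le_refl b, hba, le_refl a, hpa, hb,
        fun m h1 h2 => hex m h1 h2⟩

lemma exists_rep (hn : 0 < n) (e : ℕ) (i : Fin n) :
    ∃ m, e < m ∧ m ≤ e + n ∧ ixx hn m = i := by
  obtain ⟨k, s, hs, he⟩ : ∃ k s, s < n ∧ e = k * n + s :=
    ⟨e / n, e % n, Nat.mod_lt e hn, (Nat.div_add_mod' e n).symm⟩
  have hin : (i : ℕ) < n := i.2
  by_cases h : s < (i : ℕ)
  · refine ⟨(i : ℕ) + k * n, by omega, by omega, ?_⟩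
    apply Fin.ext
    show ((i : ℕ) + k * n) % n = (i : ℕ)
    rw [Nat.add_mul_mod_self_right, Nat.mod_eq_of_lt hin]
  · refine ⟨(i : ℕ) + k * n + n, by omega, by omega, ?_⟩
    apply Fin.ext
    show ((i : ℕ) + k * n + n) % n = (i : ℕ)
    rw [Nat.add_mod_right, Nat.add_mul_mod_self_right, Nat.mod_eq_of_lt hin]

lemma rep_unique (hn : 0 < n) {e m m' : ℕ} (h1 : e < m) (h2 : m ≤ e + n)
    (h1' : e < m') (h2' : m' ≤ e + n) (hix : ixx hn m = ixx hn m') : m = m' := by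
  have hmod : m % n = m' % n := congrArg Fin.val hix
  rcases le_total m m' with h | h
  · have hd : n ∣ m' - m := (Nat.modEq_iff_dvd' h).mp hmod
    have := Nat.eq_zero_of_dvd_of_lt hd
    omega
  · have hd : n ∣ m - m' := (Nat.modEq_iff_dvd' h).mp hmod.symm
    have := Nat.eq_zero_of_dvd_of_lt hd
    omega

/-- The key combinatorial fact: if `p` and `q` are both identically zero, or both
not identically zero, there is a nonzero mod-2 "weight" satisfying all edge constraints. -/
lemma exists_c (hn : 0 < n) (p q : Fin n → ℕ) (hiff : (∀ i, p i = 0) ↔ (∀ i, q i = 0)) :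
    ∃ c : Fin n → ZMod 2, (∃ k, c k ≠ 0) ∧
      ∀ i : Fin n, (2 : ZMod 2) ^ p i * c i = 2 ^ q i * c (sc hn i) := by
  classical
  have h20 : (2 : ZMod 2) = 0 := by decide
  by_cases hall : ∀ i, p i = 0
  · have hallq := hiff.mp hall
    refine ⟨fun _ => 1, ⟨⟨0, hn⟩, one_ne_zero⟩, fun i => by rw [hall i, hallq i]⟩
  · have hallq : ¬ ∀ i, q i = 0 := fun h => hall (hiff.mpr h)
    push_neg at hall hallq
    obtain ⟨a₀, ha₀⟩ := hall
    obtain ⟨b₀, hb₀⟩ := hallq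
    set b : ℕ := (b₀ : ℕ) with hbdef
    set a : ℕ := if (b₀ : ℕ) < (a₀ : ℕ) then (a₀ : ℕ) else (a₀ : ℕ) + n with hadef
    have hixb : ixx hn b = b₀ := ixx_coe hn b₀
    have hixa : ixx hn a = a₀ := by
      rw [hadef]
      split_ifs
      · exact ixx_coe hn a₀
      · rw [ixx_add_n]; exact ixx_coe hn a₀
    have hba : b < a ∧ a ≤ b + n := by
      have := a₀.2; have := b₀.2
      rw [hadef, hbdef]; split_ifs <;> omega
    obtain ⟨e₁, e₂, he1, he2, he3, hpe₁, hqe₂, hint⟩ :=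
      walk hn p q b (hixb ▸ hb₀) a hba.1 (hixa ▸ ha₀)
    have he₁n : e₁ ≤ e₂ + n := by omega
    set c : Fin n → ZMod 2 :=
      fun i => if ∃ m, e₂ < m ∧ m ≤ e₁ ∧ ixx hn m = i then 1 else 0 with hc
    have hc1 : ∀ m, e₂ < m → m ≤ e₁ → c (ixx hn m) = 1 := by
      intro m hm1 hm2
      rw [hc]; exact if_pos ⟨m, hm1, hm2, rfl⟩
    have hc0 : ∀ m, e₁ < m → m ≤ e₂ + n → c (ixx hn m) = 0 := by
      intro m hm1 hm2
      rw [hc]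
      refine if_neg ?_
      rintro ⟨m', h1', h2', hix⟩
      have := rep_unique hn h1' (le_trans h2' he₁n) (by omega : e₂ < m) hm2 hix
      omega
    refine ⟨c, ⟨ixx hn e₁, by rw [hc1 e₁ he2 (le_refl e₁)]; exact one_ne_zero⟩, ?_⟩
    intro i
    obtain ⟨m, hm1, hm2, rfl⟩ := exists_rep hn e₂ i
    rw [sc_ixx]
    rcases lt_trichotomy m e₁ with hlt | heq | hgt
    · obtain ⟨hp0, hq0⟩ := hint m hm1 hlt
      rw [hp0, hq0, pow_zero, hc1 m hm1 (le_of_lt hlt), hc1 (m+1) (by omega) (by omega)]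
    · subst heq
      rw [h20, zero_pow hpe₁, zero_mul]
      by_cases hq : q (ixx hn m) = 0
      · have hmn : m < e₂ + n := by
          rcases eq_or_lt_of_le he₁n with h | h
          · exact absurd (show q (ixx hn e₂) = 0 by rw [h, ixx_add_n] at hq; exact hq) hqe₂
          · exact h
        rw [hq, pow_zero, one_mul, hc0 (m+1) (by omega) (by omega)]
      · rw [zero_pow hq, zero_mul]
    · rw [hc0 m hgt hm2, mul_zero, h20]
      by_cases hmn : m < e₂ + n
      · rw [hc0 (m+1) (by omega) (by omega), mul_zero]
      · have hm : m = e₂ + n := by omega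
        have : ixx hn m = ixx hn e₂ := by rw [hm, ixx_add_n]
        rw [zero_pow (by rw [this]; exact hqe₂), zero_mul]

end Comb

section Homs

variable {n : ℕ} (hn : 0 < n) (p q r : Fin n → ℕ)

/-- the map sending `t` to `ofAdd 1` and all `b j` to `1` respects the relations. -/
lemma psi_cond : ∀ w ∈ echinusRels n hn p q r,
    FreeGroup.lift (fun x : Option (Fin n) => x.elim (ofAdd (1:ℤ)) (fun _ => 1)) w = 1 := by
  intro w hw
  rcases hw with (⟨j, rfl⟩ | ⟨i, j, hij, rfl⟩) | hw
  · simp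
  · simp
  · rw [Set.mem_singleton_iff] at hw
    subst hw
    simp

lemma phic_cond (c : Fin n → ZMod 2) (hr : ∀ i, 1 ≤ r i)
    (hcmid : ∀ i j : Fin n, (i:ℕ) + 1 = (j:ℕ) → (2:ZMod 2) ^ p i * c i = 2 ^ q i * c j)
    (hct : (2:ZMod 2) ^ p ⟨n-1, Nat.sub_lt hn Nat.one_pos⟩ * c ⟨n-1, Nat.sub_lt hn Nat.one_pos⟩
      = 2 ^ q ⟨n-1, Nat.sub_lt hn Nat.one_pos⟩ * c ⟨0, hn⟩) :
    ∀ w ∈ echinusRels n hn p q r,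
      FreeGroup.lift (fun x : Option (Fin n) =>
        x.elim (1 : Multiplicative (ZMod 2)) (fun j => ofAdd (c j))) w = 1 := by
  have hpow : ∀ (x : ZMod 2) (k : ℕ), (ofAdd x) ^ 2 ^ k = ofAdd ((2:ZMod 2) ^ k * x) := by
    intro x k
    rw [← ofAdd_nsmul, nsmul_eq_mul]
    congr 1
    push_cast
    ring
  intro w hw
  rcases hw with (⟨j, rfl⟩ | ⟨i, j, hij, rfl⟩) | hw
  · rw [map_pow, FreeGroup.lift_apply_of]
    show (ofAdd (c j)) ^ 2 ^ r j = 1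
    rw [hpow, show (2:ZMod 2) = 0 by decide, zero_pow (by have := hr j; omega), zero_mul,
      ofAdd_zero]
  · rw [map_mul, map_inv, map_pow, map_pow, FreeGroup.lift_apply_of, FreeGroup.lift_apply_of]
    show (ofAdd (c i)) ^ 2 ^ p i * ((ofAdd (c j)) ^ 2 ^ q i)⁻¹ = 1
    rw [hpow, hpow, hcmid i j hij, mul_inv_cancel]
  · rw [Set.mem_singleton_iff] at hw
    subst hw
    rw [map_mul, map_mul, map_mul, map_inv, map_inv, map_pow, map_pow,
      FreeGroup.lift_apply_of, FreeGroup.lift_apply_of, FreeGroup.lift_apply_of]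
    show (1 : Multiplicative (ZMod 2))⁻¹ *
        (ofAdd (c ⟨n-1, Nat.sub_lt hn Nat.one_pos⟩)) ^ 2 ^ p ⟨n-1, Nat.sub_lt hn Nat.one_pos⟩ * 1 *
        ((ofAdd (c ⟨0, hn⟩)) ^ 2 ^ q ⟨n-1, Nat.sub_lt hn Nat.one_pos⟩)⁻¹ = 1
    rw [hpow, hpow, hct, inv_one, one_mul, mul_one, mul_inv_cancel]

/-- If all generators `b j` are trivial, the group is infinite cyclic. -/
lemma iso_of_allB
    (hB : ∀ j : Fin n, (PresentedGroup.of (rels := echinusRels n hn p q r) (some j)) = 1) :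
    Nonempty (PresentedGroup (echinusRels n hn p q r) ≃* Multiplicative ℤ) := by
  let φ : PresentedGroup (echinusRels n hn p q r) →* Multiplicative ℤ :=
    PresentedGroup.toGroup (psi_cond hn p q r)
  let ψ : Multiplicative ℤ →* PresentedGroup (echinusRels n hn p q r) :=
    zpowersHom _ (PresentedGroup.of (rels := echinusRels n hn p q r) none)
  have h1 : ψ.comp φ = MonoidHom.id _ := by
    apply PresentedGroup.ext
    intro x
    cases x with
    | none =>
      simp only [MonoidHom.comp_apply, MonoidHom.id_apply]
      rw [show φ (PresentedGroup.of none) = ofAdd (1:ℤ) from PresentedGroup.toGroup.of _,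
        zpowersHom_apply, toAdd_ofAdd, zpow_one]
    | some j =>
      simp only [MonoidHom.comp_apply, MonoidHom.id_apply]
      rw [show φ (PresentedGroup.of (some j)) = 1 from PresentedGroup.toGroup.of _, map_one, hB j]
  have h2 : φ.comp ψ = MonoidHom.id _ := by
    apply MonoidHom.ext_mint
    simp only [MonoidHom.comp_apply, MonoidHom.id_apply, zpowersHom_apply, toAdd_ofAdd, zpow_one]
    exact PresentedGroup.toGroup.of _
  exact ⟨MonoidHom.toMulEquiv φ ψ h1 h2⟩

end Homs

end Stmt10Aux

open Stmt10Aux Multiplicative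

theorem stmt10 (n : ℕ) (hn : 0 < n) (p q r : Fin n → ℕ) (hr : ∀ i, 1 ≤ r i) :
    Nonempty (PresentedGroup (echinusRels n hn p q r) ≃* Multiplicative ℤ) ↔
      ((∑ i, p i = 0 ∧ ∑ i, q i ≠ 0) ∨ (∑ i, p i ≠ 0 ∧ ∑ i, q i = 0)) := by
  have hp' : (∑ i, p i = 0) ↔ ∀ i, p i = 0 := by
    rw [Finset.sum_eq_zero_iff]
    exact ⟨fun h i => h i (Finset.mem_univ i), fun h i _ => h i⟩
  have hq' : (∑ i, q i = 0) ↔ ∀ i, q i = 0 := by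
    rw [Finset.sum_eq_zero_iff]
    exact ⟨fun h i => h i (Finset.mem_univ i), fun h i _ => h i⟩
  constructor
  · rintro ⟨θ⟩
    by_contra hcon
    have hsir : (∑ i, p i = 0) ↔ (∑ i, q i = 0) := by tauto
    have hiff : (∀ i, p i = 0) ↔ (∀ i, q i = 0) := by
      rw [← hp', ← hq']; exact hsir
    obtain ⟨c, ⟨k, hk⟩, hc⟩ := exists_c hn p q hiff
    have hcmid : ∀ i j : Fin n, (i:ℕ) + 1 = (j:ℕ) →
        (2:ZMod 2) ^ p i * c i = 2 ^ q i * c j := by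
      intro i j hij
      have hsc : sc hn i = j := by
        unfold sc
        rw [dif_pos (by have := j.2; omega)]
        exact Fin.ext hij
      rw [← hsc]; exact hc i
    have hct : (2:ZMod 2) ^ p ⟨n-1, Nat.sub_lt hn Nat.one_pos⟩ *
        c ⟨n-1, Nat.sub_lt hn Nat.one_pos⟩
        = 2 ^ q ⟨n-1, Nat.sub_lt hn Nat.one_pos⟩ * c ⟨0, hn⟩ := by
      have hsc : sc hn ⟨n-1, Nat.sub_lt hn Nat.one_pos⟩ = ⟨0, hn⟩ := by
        unfold sc
        rw [dif_neg (by simp; omega)]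
      rw [← hsc]; exact hc _
    let φ2 : PresentedGroup (echinusRels n hn p q r) →* Multiplicative (ZMod 2) :=
      PresentedGroup.toGroup (phic_cond hn p q r c hr hcmid hct)
    let ψ : PresentedGroup (echinusRels n hn p q r) →* Multiplicative ℤ :=
      PresentedGroup.toGroup (psi_cond hn p q r)
    have hψT : ψ (PresentedGroup.of none) = ofAdd (1:ℤ) := PresentedGroup.toGroup.of _
    have hφT : φ2 (PresentedGroup.of none) = 1 := PresentedGroup.toGroup.of _
    have hφk : φ2 (PresentedGroup.of (some k)) = ofAdd (c k) := PresentedGroup.toGroup.of _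
    set T := PresentedGroup.of (rels := echinusRels n hn p q r) none with hT
    set Bk := PresentedGroup.of (rels := echinusRels n hn p q r) (some k) with hBk
    set u := toAdd (θ T) with hu
    set v := toAdd (θ Bk) with hv
    have hθT : θ.symm (ofAdd u) = T := by rw [hu, ofAdd_toAdd, MulEquiv.symm_apply_apply]
    have hθk : θ.symm (ofAdd v) = Bk := by rw [hv, ofAdd_toAdd, MulEquiv.symm_apply_apply]
    have hofAdd : ∀ z : ℤ, ofAdd z = (ofAdd (1:ℤ)) ^ z := by
      intro z
      rw [← ofAdd_zsmul, smul_eq_mul, mul_one]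
    -- the two composite homs
    set F : Multiplicative ℤ →* Multiplicative ℤ := ψ.comp θ.symm.toMonoidHom with hF
    set K : Multiplicative ℤ →* Multiplicative (ZMod 2) := φ2.comp θ.symm.toMonoidHom with hK
    set α := toAdd (F (ofAdd (1:ℤ))) with hα
    set d := toAdd (K (ofAdd (1:ℤ))) with hd
    have hFu : u * α = 1 := by
      have h1 : F (ofAdd u) = ofAdd (1:ℤ) := by
        show ψ (θ.symm (ofAdd u)) = _
        rw [hθT]; exact hψT
      rw [hofAdd u, map_zpow] at h1
      have := congrArg toAdd h1
      rwa [toAdd_zpow, ← hα, smul_eq_mul, toAdd_ofAdd, mul_comm] at this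
    have hKu : (u : ZMod 2) * d = 0 := by
      have h1 : K (ofAdd u) = 1 := by
        show φ2 (θ.symm (ofAdd u)) = _
        rw [hθT]; exact hφT
      have := congrArg toAdd h1
      rw [hofAdd u, map_zpow, toAdd_zpow, ← hd, zsmul_eq_mul] at this
      simpa using this
    have hKv : (v : ZMod 2) * d = c k := by
      have h1 : K (ofAdd v) = ofAdd (c k) := by
        show φ2 (θ.symm (ofAdd v)) = _
        rw [hθk]; exact hφk
      have := congrArg toAdd h1
      rwa [hofAdd v, map_zpow, toAdd_zpow, ← hd, zsmul_eq_mul, toAdd_ofAdd] at this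
    have hdne : d ≠ 0 := by
      intro h0
      rw [h0, mul_zero] at hKv
      exact hk hKv.symm
    have hu2 : (u : ZMod 2) = 0 := by
      have : ∀ x y : ZMod 2, x * y = 0 → y ≠ 0 → x = 0 := by decide
      exact this _ _ hKu hdne
    have : ((u * α : ℤ) : ZMod 2) = 1 := by rw [hFu]; norm_num
    rw [Int.cast_mul, hu2, zero_mul] at this
    exact absurd this (by decide)
  · rintro (⟨hps, hqs⟩ | ⟨hps, hqs⟩)
    · exact iso_of_allB hn p q r (allB_of_p hn p q r (hp'.mp hps) hqs hr)
    · exact iso_of_allB hn p q r (allB_of_q hn p q r (hq'.mp hqs) hps hr)
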